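/- Let P be a vector space partition of PG(v-1,q) containing at least one element of dimension strictly larger than k (with 1 ≤ k ≤ v-1). Then the set H_k of points covered by elements of P of dimension at most k is q^k-divisible: for every hyperplane H, the number of points of H_k outside H is divisible by q^k. -/
import Mathlib

open Classical Module

section Aux

variable {K : Type} [Field K] [Fintype K] {v : ℕ}

/-- Counting the elements of a submodule `A` outside a submodule `H`. -/
lemma supertail_aux_count (A H : Submodule K (Fin v → K)) :
    (Finset.univ.filter (fun x : Fin v → K => x ∈ A ∧ x ∉ H)).card
      = Fintype.card K ^ finrank K ↥A - Fintype.card K ^ finrank K ↥(A ⊓ H) := by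
  classical
  have h1 : (Finset.univ.filter (fun x : Fin v → K => x ∈ A)).card
      = Fintype.card K ^ finrank K ↥A := by
    rw [← Fintype.card_subtype]
    exact card_eq_pow_finrank
  have h2 : (Finset.univ.filter (fun x : Fin v → K => x ∈ A ∧ x ∈ H)).card
      = Fintype.card K ^ finrank K ↥(A ⊓ H) := by
    have he : Finset.univ.filter (fun x : Fin v → K => x ∈ A ∧ x ∈ H)
        = Finset.univ.filter (fun x : Fin v → K => x ∈ A ⊓ H) := by
      apply Finset.filter_congr
      intro x _; simp [Submodule.mem_inf]
    rw [he, ← Fintype.card_subtype]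
    exact card_eq_pow_finrank
  have h3 := Finset.card_filter_add_card_filter_not
    (s := Finset.univ.filter (fun x : Fin v → K => x ∈ A)) (p := fun x => x ∈ H)
  rw [Finset.filter_filter, Finset.filter_filter] at h3
  omega

/-- If `A` is not contained in the hyperplane `H` then `A ⊓ H` has corank one in `A`. -/
lemma supertail_aux_inf (A H : Submodule K (Fin v → K)) (hH : finrank K ↥H = v - 1)
    (hv : 1 ≤ v) (hAH : ¬ A ≤ H) :
    finrank K ↥(A ⊓ H) + 1 = finrank K ↥A := by
  have hV : finrank K (Fin v → K) = v := by simp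
  have hlt : H < A ⊔ H := by
    refine lt_of_le_of_ne le_sup_right (fun h => hAH ?_)
    rw [h]; exact le_sup_left
  have h1 : finrank K ↥H < finrank K ↥(A ⊔ H) := Submodule.finrank_lt_finrank_of_lt hlt
  have h2 : finrank K ↥(A ⊔ H) ≤ v := by
    have := Submodule.finrank_le (A ⊔ H)
    rwa [hV] at this
  have h3 := Submodule.finrank_sup_add_finrank_inf_eq A H
  omega

end Aux

/-- For a vector space partition P of PG(v-1,q) containing an element of
dimension larger than k, the set of points covered by the elements of dimension
at most k is q^k-divisible. -/
theorem supertail_divisible {K : Type} [Field K] [Fintype K] (q v k : ℕ)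
    (hq : q = Fintype.card K) (hk1 : 1 ≤ k) (hk2 : k ≤ v - 1)
    (P : Finset (Submodule K (Fin v → K)))
    (hbot : ∀ A ∈ P, A ≠ ⊥)
    (hpart : ∀ x : Fin v → K, x ≠ 0 → ∃! A, A ∈ P ∧ x ∈ A)
    (hex : ∃ A ∈ P, k < finrank K ↥A)
    (H : Submodule K (Fin v → K)) (hH : finrank K ↥H = v - 1) (hHtop : H ≠ ⊤) :
    q ^ k ∣
      Set.ncard {W : Submodule K (Fin v → K) |
        finrank K ↥W = 1 ∧ ¬ W ≤ H ∧ ∃ A ∈ P, finrank K ↥A ≤ k ∧ W ≤ A} := by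
  classical
  have hq2 : 2 ≤ q := by rw [hq]; exact Fintype.one_lt_card
  have hv : 2 ≤ v := by omega
  have hV : finrank K (Fin v → K) = v := by simp
  -- the finset of vectors we count
  set T : Finset (Fin v → K) := Finset.univ.filter
    (fun x => x ∉ H ∧ ∃ A ∈ P, finrank K ↥A ≤ k ∧ x ∈ A) with hT
  -- basic fact: elements outside H are nonzero
  have hzero : ∀ x : Fin v → K, x ∉ H → x ≠ 0 := by
    intro x hx h0; exact hx (h0 ▸ H.zero_mem)
  -- the target set as a finset
  set Sfin : Finset (Submodule K (Fin v → K)) := T.image (fun x => K ∙ x) with hSfin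
  have hScoe : (Sfin : Set (Submodule K (Fin v → K)))
      = {W : Submodule K (Fin v → K) |
        finrank K ↥W = 1 ∧ ¬ W ≤ H ∧ ∃ A ∈ P, finrank K ↥A ≤ k ∧ W ≤ A} := by
    ext W
    simp only [hSfin, Finset.coe_image, Set.mem_image, Finset.mem_coe, hT,
      Finset.mem_filter, Finset.mem_univ, true_and, Set.mem_setOf_eq]
    constructor
    · rintro ⟨x, ⟨hxH, A, hA, hAk, hxA⟩, rfl⟩
      have hx0 : x ≠ 0 := hzero x hxH
      refine ⟨finrank_span_singleton hx0, ?_, A, hA, hAk, ?_⟩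
      · intro hle
        exact hxH (hle (Submodule.mem_span_singleton_self x))
      · exact (Submodule.span_singleton_le_iff_mem x A).mpr hxA
    · rintro ⟨h1, h2, A, hA, hAk, hWA⟩
      have hWbot : W ≠ ⊥ := by
        intro h; rw [h] at h1; simp at h1
      obtain ⟨x, hxW, hx0⟩ := Submodule.exists_mem_ne_zero_of_ne_bot hWbot
      have hspan : (K ∙ x) = W := by
        apply Submodule.eq_of_le_of_finrank_eq
        · exact (Submodule.span_singleton_le_iff_mem x W).mpr hxW
        · rw [finrank_span_singleton hx0, h1]
      refine ⟨x, ⟨?_, A, hA, hAk, hWA hxW⟩, hspan⟩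
      intro hxH
      exact h2 (hspan ▸ (Submodule.span_singleton_le_iff_mem x H).mpr hxH)
  -- each fiber of the span map over Sfin has q - 1 elements
  have hfiber : ∀ W ∈ Sfin, (T.filter (fun x => (K ∙ x) = W)).card = q - 1 := by
    intro W hW
    have hWprop : finrank K ↥W = 1 ∧ ¬ W ≤ H ∧ ∃ A ∈ P, finrank K ↥A ≤ k ∧ W ≤ A := by
      have : W ∈ (Sfin : Set (Submodule K (Fin v → K))) := hW
      rw [hScoe] at this; exact this
    obtain ⟨h1, h2, A, hA, hAk, hWA⟩ := hWprop
    have heq : T.filter (fun x => (K ∙ x) = W)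
        = (Finset.univ.filter (fun x : Fin v → K => x ∈ W)).erase 0 := by
      ext x
      simp only [Finset.mem_erase, Finset.mem_filter, Finset.mem_univ, true_and, hT]
      constructor
      · rintro ⟨⟨hxH, _⟩, hspan⟩
        exact ⟨hzero x hxH, hspan ▸ Submodule.mem_span_singleton_self x⟩
      · rintro ⟨hx0, hxW⟩
        have hspan : (K ∙ x) = W := by
          apply Submodule.eq_of_le_of_finrank_eq
          · exact (Submodule.span_singleton_le_iff_mem x W).mpr hxW
          · rw [finrank_span_singleton hx0, h1]
        have hxH : x ∉ H := fun hxH =>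
          h2 (hspan ▸ (Submodule.span_singleton_le_iff_mem x H).mpr hxH)
        exact ⟨⟨hxH, A, hA, hAk, hWA hxW⟩, hspan⟩
    rw [heq, Finset.card_erase_of_mem (by simp [W.zero_mem])]
    have : (Finset.univ.filter (fun x : Fin v → K => x ∈ W)).card = q := by
      rw [← Fintype.card_subtype, hq]
      rw [show Fintype.card ↥W = Fintype.card K ^ finrank K ↥W from card_eq_pow_finrank, h1,
        pow_one]
    omega
  -- T has (q-1) * |Sfin| elements
  have hTcard : T.card = Sfin.card * (q - 1) := by
    rw [Finset.card_eq_sum_card_fiberwise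
      (f := fun x => (K ∙ x)) (t := Sfin) (fun x hx => Finset.mem_image_of_mem _ hx)]
    rw [Finset.sum_congr rfl hfiber, Finset.sum_const, smul_eq_mul]
  -- the contribution of each partition element
  have hcontrib : ∀ A ∈ P, k < finrank K ↥A →
      q ^ k * (q - 1) ∣ (Finset.univ.filter (fun x : Fin v → K => x ∈ A ∧ x ∉ H)).card := by
    intro A hA hAk
    rw [supertail_aux_count A H, hq] at *
    by_cases hAH : A ≤ H
    · have : A ⊓ H = A := inf_eq_left.mpr hAH
      rw [this]; simp
    · have hinf := supertail_aux_inf A H hH (by omega) hAH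
      set a := finrank K ↥A with ha
      have : Fintype.card K ^ a - Fintype.card K ^ finrank K ↥(A ⊓ H)
          = Fintype.card K ^ (a - 1) * (Fintype.card K - 1) := by
        have h1 : a = (a - 1) + 1 := by omega
        have h2 : finrank K ↥(A ⊓ H) = a - 1 := by omega
        rw [h2, Nat.mul_sub_one, ← pow_succ, ← h1]
      rw [this]
      exact Nat.mul_dvd_mul (pow_dvd_pow _ (by omega)) dvd_rfl
  -- partition of the complement of H
  have hcover : Finset.univ.filter (fun x : Fin v → K => x ∉ H)
      = P.biUnion (fun A => Finset.univ.filter (fun x : Fin v → K => x ∈ A ∧ x ∉ H)) := by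
    ext x
    simp only [Finset.mem_filter, Finset.mem_univ, true_and, Finset.mem_biUnion]
    constructor
    · intro hxH
      obtain ⟨A, ⟨hA, hxA⟩, _⟩ := hpart x (hzero x hxH)
      exact ⟨A, hA, hxA, hxH⟩
    · rintro ⟨A, _, _, hxH⟩; exact hxH
  have hdisj : ∀ A ∈ P, ∀ B ∈ P, A ≠ B →
      Disjoint (Finset.univ.filter (fun x : Fin v → K => x ∈ A ∧ x ∉ H))
        (Finset.univ.filter (fun x : Fin v → K => x ∈ B ∧ x ∉ H)) := by
    intro A hA B hB hAB
    rw [Finset.disjoint_left]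
    intro x hx1 hx2
    simp only [Finset.mem_filter, Finset.mem_univ, true_and] at hx1 hx2
    obtain ⟨C, _, hCuniq⟩ := hpart x (hzero x hx1.2)
    exact hAB ((hCuniq A ⟨hA, hx1.1⟩).trans (hCuniq B ⟨hB, hx2.1⟩).symm)
  have hsum : (Finset.univ.filter (fun x : Fin v → K => x ∉ H)).card
      = ∑ A ∈ P, (Finset.univ.filter (fun x : Fin v → K => x ∈ A ∧ x ∉ H)).card := by
    rw [hcover, Finset.card_biUnion hdisj]
  -- the count of T as a sum over small elements
  have hTeq : T = (P.filter (fun A : Submodule K (Fin v → K) => finrank K ↥A ≤ k)).biUnion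
      (fun A => Finset.univ.filter (fun x : Fin v → K => x ∈ A ∧ x ∉ H)) := by
    ext x
    simp only [hT, Finset.mem_filter, Finset.mem_univ, true_and, Finset.mem_biUnion]
    constructor
    · rintro ⟨hxH, A, hA, hAk, hxA⟩
      exact ⟨A, ⟨hA, hAk⟩, hxA, hxH⟩
    · rintro ⟨A, ⟨hA, hAk⟩, hxA, hxH⟩
      exact ⟨hxH, A, hA, hAk, hxA⟩
  have hTsum : T.card
      = ∑ A ∈ P.filter (fun A : Submodule K (Fin v → K) => finrank K ↥A ≤ k),
          (Finset.univ.filter (fun x : Fin v → K => x ∈ A ∧ x ∉ H)).card := by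
    rw [hTeq]
    exact Finset.card_biUnion (fun A hA B hB hAB =>
      hdisj A (Finset.mem_filter.mp hA).1 B (Finset.mem_filter.mp hB).1 hAB)
  -- split the total sum
  have hsplit := Finset.sum_filter_add_sum_filter_not P (fun A : Submodule K (Fin v → K) => finrank K ↥A ≤ k)
    (fun A => (Finset.univ.filter (fun x : Fin v → K => x ∈ A ∧ x ∉ H)).card)
  -- the total count is divisible
  have htotal : q ^ k * (q - 1) ∣
      (Finset.univ.filter (fun x : Fin v → K => x ∉ H)).card := by
    have : (Finset.univ.filter (fun x : Fin v → K => x ∉ H)).card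
        = q ^ (v - 1) * (q - 1) := by
      have h1 : (Finset.univ.filter (fun x : Fin v → K => x ∈ (⊤ : Submodule K (Fin v → K))
          ∧ x ∉ H)).card = Fintype.card K ^ finrank K (⊤ : Submodule K (Fin v → K))
            - Fintype.card K ^ finrank K ↥((⊤ : Submodule K (Fin v → K)) ⊓ H) :=
        supertail_aux_count ⊤ H
      simp only [Submodule.mem_top, true_and] at h1
      rw [show (⊤ : Submodule K (Fin v → K)) ⊓ H = H from top_inf_eq H] at h1
      rw [h1, finrank_top, hV, hH, ← hq]
      have h2 : v = (v - 1) + 1 := by omega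
      rw [Nat.mul_sub_one, ← pow_succ, ← h2]
    rw [this]
    exact Nat.mul_dvd_mul (pow_dvd_pow _ hk2) dvd_rfl
  have hbig : q ^ k * (q - 1) ∣
      ∑ A ∈ P.filter (fun A : Submodule K (Fin v → K) => ¬ finrank K ↥A ≤ k),
        (Finset.univ.filter (fun x : Fin v → K => x ∈ A ∧ x ∉ H)).card :=
    Finset.dvd_sum (fun A hA => by
      obtain ⟨hAP, hAk⟩ := Finset.mem_filter.mp hA
      exact hcontrib A hAP (by omega))
  have hle : ∑ A ∈ P.filter (fun A : Submodule K (Fin v → K) => ¬ finrank K ↥A ≤ k),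
        (Finset.univ.filter (fun x : Fin v → K => x ∈ A ∧ x ∉ H)).card
      ≤ (Finset.univ.filter (fun x : Fin v → K => x ∉ H)).card := by omega
  have hTdvd : q ^ k * (q - 1) ∣ T.card := by
    have : T.card = (Finset.univ.filter (fun x : Fin v → K => x ∉ H)).card
        - ∑ A ∈ P.filter (fun A : Submodule K (Fin v → K) => ¬ finrank K ↥A ≤ k),
            (Finset.univ.filter (fun x : Fin v → K => x ∈ A ∧ x ∉ H)).card := by omega
    rw [this]
    exact Nat.dvd_sub htotal hbig
  -- conclude
  rw [← hScoe, Set.ncard_coe_finset]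
  rw [hTcard] at hTdvd
  exact (Nat.mul_dvd_mul_iff_right (by omega : 0 < q - 1)).mp hTdvd
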